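/- For every n ∈ ℕ there exists a polynomial P : ℝ² → ℝ such that |∂²P/∂y₁²(y)| ≤ |y|^{2n}·|1 - |y|²| and |∂²P/∂y₂²(y)| ≤ |y|^{2n}·|1 - |y|²| for all y ∈ ℝ², and ∂²P/∂y₂²(0, y₂) = y₂^{2n}(1 - y₂²) for all y₂ ∈ ℝ. -/

import Mathlib

open MvPolynomial Finset

namespace Calib

/-- Product of (4j+1) for j < k. -/
def FF : ℕ → ℕ := fun k => ∏ j ∈ Finset.range k, (4*j+1)

lemma FF_succ (k : ℕ) : FF (k+1) = FF k * (4*k+1) := Finset.prod_range_succ _ _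

lemma FF_pos (k : ℕ) : 0 < FF k := Finset.prod_pos (fun j _ => by omega)

/-- The coefficients c_k. -/
noncomputable def c (n k : ℕ) : ℝ :=
  ((4*k+1) * (2*n).choose (2*k) * FF k * FF (n-k)) / ((4*n+1) * FF n)

lemma c_nonneg (n k : ℕ) : 0 ≤ c n k := by
  unfold c
  positivity

lemma c_denom_pos (n : ℕ) : (0:ℝ) < (4*n+1) * FF n := by
  have := FF_pos n; positivity

lemma c_top (n : ℕ) : c n n = 1 := by
  unfold c
  rw [Nat.choose_self, Nat.sub_self]
  have := c_denom_pos n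
  have h1 : FF 0 = 1 := rfl
  rw [h1]
  push_cast
  field_simp
  exact div_self (by have := FF_pos n; positivity)

lemma c_eq_zero (n k : ℕ) (h : n < k) : c n k = 0 := by
  unfold c
  rw [Nat.choose_eq_zero_of_lt (by omega)]
  simp

/-- choose identity -/
lemma choose_step (k m : ℕ) :
    (2*k+2*m+2).choose (2*k+2) * ((2*k+2)*(2*k+1)) =
      (2*k+2*m+2).choose (2*k) * ((2*m+2)*(2*m+1)) := by
  have h1 := Nat.choose_succ_right_eq (2*k+2*m+2) (2*k+1)
  have h2 := Nat.choose_succ_right_eq (2*k+2*m+2) (2*k)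
  have e1 : 2*k+2*m+2 - (2*k+1) = 2*m+1 := by omega
  have e2 : 2*k+2*m+2 - (2*k) = 2*m+2 := by omega
  rw [e1] at h1; rw [e2] at h2
  have h1' : (2*k+1+1) = 2*k+2 := by omega
  rw [h1'] at h1
  calc (2*k+2*m+2).choose (2*k+2) * ((2*k+2)*(2*k+1))
      = ((2*k+2*m+2).choose (2*k+2) * (2*k+2)) * (2*k+1) := by ring
    _ = ((2*k+2*m+2).choose (2*k+1) * (2*m+1)) * (2*k+1) := by rw [h1]
    _ = ((2*k+2*m+2).choose (2*k+1) * (2*k+1)) * (2*m+1) := by ring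
    _ = ((2*k+2*m+2).choose (2*k) * (2*m+2)) * (2*m+1) := by rw [h2]
    _ = _ := by ring

/-- symmetry -/
lemma c_symm (j m : ℕ) : c (j+m) j * (4*m+1) = c (j+m) m * (4*j+1) := by
  unfold c
  have e1 : j+m-j = m := by omega
  have e2 : j+m-m = j := by omega
  rw [e1, e2]
  have e3 : (2*(j+m)).choose (2*j) = (2*(j+m)).choose (2*m) := by
    rw [← Nat.choose_symm (by omega : 2*j ≤ 2*(j+m))]
    congr 1; omega
  rw [e3]
  have := c_denom_pos (j+m)
  field_simp

/-- recursion -/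
lemma c_rec (k m : ℕ) :
    c (k+m+1) (k+1) * ((2*k+2)*(2*k+1)*(4*m+1)) =
      c (k+m+1) k * ((2*m+2)*(2*m+1)*(4*(k:ℝ)+5)) := by
  unfold c
  have e1 : k+m+1-(k+1) = m := by omega
  have e2 : k+m+1-k = m+1 := by omega
  rw [e1, e2, FF_succ k, FF_succ m]
  have hch := choose_step k m
  have e3 : 2*(k+m+1) = 2*k+2*m+2 := by omega
  have e4 : 2*(k+1) = 2*k+2 := by omega
  rw [e3, e4]
  have hd := c_denom_pos (k+m+1)
  rw [div_mul_eq_mul_div, div_mul_eq_mul_div, div_eq_div_iff (by positivity) (by positivity)]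
  have hch' : ((2*k+2*m+2).choose (2*k+2) * ((2*k+2)*(2*k+1)) : ℝ) =
      ((2*k+2*m+2).choose (2*k) * ((2*m+2)*(2*m+1)) : ℝ) := by exact_mod_cast congrArg Nat.cast hch
  push_cast
  push_cast at hch'
  linear_combination ((4*(k:ℝ)+5)*(4*k+1)*(4*m+1)*(FF k)*(FF m)*((4*((k:ℝ)+m+1)+1)*FF (k+m+1))) * hch'

lemma c_rec' (n k m : ℕ) (h : n = k+m+1) :
    c n (k+1) * ((2*k+2)*(2*k+1)*(4*m+1)) = c n k * ((2*m+2)*(2*m+1)*(4*(k:ℝ)+5)) := by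
  subst h; exact c_rec k m

lemma c_symm' (n j m : ℕ) (h : n = j+m) : c n j * (4*m+1) = c n m * (4*j+1) := by
  subst h; exact c_symm j m

lemma c_flip (n j m : ℕ) (h : n = j+m+1) :
    c n m * ((2*j+2)*(2*j+1)) = c n j * ((2*m+2)*(2*m+1)) := by
  have hS := c_symm' n m (j+1) (by omega)
  have hR := c_rec' n j m h
  have key : c n m * ((2*j+2)*(2*j+1)) * (4*(j:ℝ)+5)
      = c n j * ((2*m+2)*(2*m+1)) * (4*(j:ℝ)+5) := by
    push_cast at hS ⊢
    linear_combination ((2*(j:ℝ)+2)*(2*j+1)) * hS + hR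
  exact mul_right_cancel₀ (by positivity) key

/-- cb k = c k + c (k-1) (with convention) -/
noncomputable def cb (n : ℕ) : ℕ → ℝ
  | 0 => c n 0
  | (k+1) => c n (k+1) + c n k

lemma cb_flip (n j m : ℕ) (h : n = j+m) :
    cb n j * ((2*m+2)*(2*m+1)) = cb n m * ((2*j+2)*(2*j+1)) := by
  match j, m with
  | 0, 0 => simp at h; subst h; norm_num
  | 0, (m'+1) =>
    have hA := c_flip n 0 m' (by omega)
    have hS := c_symm' n 0 (m'+1) (by omega)
    show c n 0 * _ = (c n (m'+1) + c n m') * _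
    push_cast at hA hS ⊢
    linear_combination (2:ℝ) * hS - hA
  | (j'+1), 0 =>
    have hA := c_flip n 0 j' (by omega)
    have hS := c_symm' n 0 (j'+1) (by omega)
    show (c n (j'+1) + c n j') * _ = c n 0 * _
    push_cast at hA hS ⊢
    linear_combination (-2:ℝ) * hS + hA
  | (j'+1), (m'+1) =>
    have hA := c_flip n j' (m'+1) (by omega)
    have hB := c_flip n (j'+1) m' (by omega)
    have hS := c_symm' n (j'+1) (m'+1) (by omega)
    show (c n (j'+1) + c n j') * _ = (c n (m'+1) + c n m') * _
    push_cast at hA hB hS ⊢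
    linear_combination -hA - hB + 2 * hS

lemma c_le_choose (n k m : ℕ) (h : n = k + m) : c n k ≤ (n.choose k : ℝ) := by
  induction m generalizing k with
  | zero => simp only [Nat.add_zero] at h; subst h; rw [c_top, Nat.choose_self]; norm_num
  | succ m' ih =>
    have IH := ih (k+1) (by omega)
    have hR := c_rec' n k m' (by omega)
    have hch : (n.choose (k+1) * (k+1) : ℝ) = (n.choose k * (m'+1) : ℝ) := by
      have := Nat.choose_succ_right_eq n k
      have e : n - k = m'+1 := by omega
      rw [e] at this
      exact_mod_cast congrArg Nat.cast this
    have hpos : (0:ℝ) ≤ (n.choose (k+1) : ℝ) := by positivity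
    have hc1 : 0 ≤ c n (k+1) := c_nonneg _ _
    have hq : (0:ℝ) < (2*m'+2)*(2*m'+1)*(4*(k:ℝ)+5) := by positivity
    apply le_of_mul_le_mul_right _ hq
    calc c n k * ((2*m'+2)*(2*m'+1)*(4*(k:ℝ)+5))
        = c n (k+1) * ((2*k+2)*(2*k+1)*(4*m'+1)) := hR.symm
      _ ≤ (n.choose (k+1) : ℝ) * ((2*k+2)*(2*k+1)*(4*m'+1)) := by
          apply mul_le_mul_of_nonneg_right IH (by positivity)
      _ ≤ (n.choose k : ℝ) * ((2*m'+2)*(2*m'+1)*(4*(k:ℝ)+5)) := by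
          have hprod : (0:ℝ) ≤ (n.choose k : ℝ) * ((2*m'+2)*(2*(k:ℝ)+6*m'+4)) := by positivity
          have heq : (n.choose k : ℝ)*((2*m'+2)*(2*m'+1)*(4*(k:ℝ)+5))
              - (n.choose (k+1) : ℝ)*((2*k+2)*(2*k+1)*(4*m'+1))
              = (n.choose k : ℝ)*((2*m'+2)*(2*(k:ℝ)+6*m'+4)) := by
            linear_combination (-(2*(2*(k:ℝ)+1)*(4*(m':ℝ)+1))) * hch
          linarith [heq, hprod]

noncomputable def aa (n : ℕ) : ℕ → ℝ
  | 0 => 1/((2*n+2)*(2*n+1))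
  | (k+1) => c n k / ((2*k+2)*(2*k+1))

noncomputable def bb (n : ℕ) : ℕ → ℝ
  | 0 => -(1/((2*n+4)*(2*n+3)))
  | 1 => -(c n 0)/2
  | (k+2) => -(c n (k+1) + c n k)/((2*k+4)*(2*k+3))

lemma aa_mul (n k : ℕ) : aa n (k+1) * ((2*(k:ℝ)+2)*(2*k+1)) = c n k := by
  show c n k / ((2*(k:ℝ)+2)*(2*k+1)) * ((2*(k:ℝ)+2)*(2*k+1)) = c n k
  rw [div_mul_cancel₀]
  positivity

lemma bb_mul (n k : ℕ) : bb n (k+1) * ((2*(k:ℝ)+2)*(2*k+1)) = -(cb n k) := by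
  match k with
  | 0 =>
    simp only [bb, cb]
    norm_num
  | (k'+1) =>
    simp only [bb, cb]
    have hne : ((2*(k':ℝ)+4)*(2*(k':ℝ)+3)) ≠ 0 := by positivity
    push_cast
    have e : (2*((k':ℝ)+1)+2)*(2*((k':ℝ)+1)+1) = (2*(k':ℝ)+4)*(2*(k':ℝ)+3) := by ring
    rw [e, div_mul_cancel₀ _ hne]

lemma aa_flip (n k m : ℕ) (h : n = k+m) : aa n k * ((2*(m:ℝ)+2)*(2*m+1)) = c n m := by
  match k with
  | 0 =>
    obtain rfl : m = n := by omega
    rw [c_top]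
    simp only [aa]
    rw [one_div, inv_mul_cancel₀ (by positivity)]
  | (j+1) =>
    have hf := c_flip n j m (by omega)
    simp only [aa]
    -- cast ok
    rw [div_mul_eq_mul_div, div_eq_iff (by positivity)]
    linear_combination -hf

lemma bb_flip (n k m : ℕ) (h : n = k+m) : bb n (k+1) * ((2*(m:ℝ)+2)*(2*m+1)) = -(cb n m) := by
  have hb := bb_mul n k
  have hf := cb_flip n k m h
  have hd : bb n (k+1) = -(cb n k) / ((2*(k:ℝ)+2)*(2*k+1)) := by
    rw [eq_div_iff (by positivity)]; exact hb
  rw [hd, div_mul_eq_mul_div, div_eq_iff (by positivity)]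
  linear_combination -hf

lemma bb_zero_mul (n : ℕ) : bb n 0 * ((2*(n:ℝ)+4)*(2*n+3)) = -(cb n (n+1)) := by
  simp only [bb, cb]
  rw [c_top, c_eq_zero n (n+1) (by omega)]
  rw [neg_mul, one_div, inv_mul_cancel₀ (by positivity)]
  norm_num

noncomputable def pv (n : ℕ) : ℕ → ℝ
  | 0 => 0
  | (k+1) => c n k

lemma cb_eq (n k : ℕ) : cb n k = c n k + pv n k := by
  cases k <;> simp [cb, pv]

noncomputable def Pm (n : ℕ) : MvPolynomial (Fin 2) ℝ :=
  (∑ k ∈ range (n+2), C (aa n k) * X 0 ^ (2*n+2-2*k) * X 1 ^ (2*k))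
  + ∑ k ∈ range (n+3), C (bb n k) * X 0 ^ (2*n+4-2*k) * X 1 ^ (2*k)

noncomputable def Sp (n : ℕ) : MvPolynomial (Fin 2) ℝ :=
  ∑ k ∈ range (n+1), C (c n k) * X 0 ^ (2*n-2*k) * X 1 ^ (2*k)

noncomputable def Sq (n : ℕ) : MvPolynomial (Fin 2) ℝ :=
  ∑ k ∈ range (n+1), C (c n (n-k)) * X 0 ^ (2*n-2*k) * X 1 ^ (2*k)

lemma pderiv1_term (d : ℝ) (i j : ℕ) :
    pderiv 1 (C d * X 0 ^ i * X 1 ^ j : MvPolynomial (Fin 2) ℝ)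
      = C (d * j) * X 0 ^ i * X 1 ^ (j-1) := by
  simp [pderiv_mul, pderiv_pow, pderiv_X_self, pderiv_X_of_ne (show (0:Fin 2) ≠ 1 by decide)]
  ring

lemma pderiv0_term (d : ℝ) (i j : ℕ) :
    pderiv 0 (C d * X 0 ^ i * X 1 ^ j : MvPolynomial (Fin 2) ℝ)
      = C (d * i) * X 0 ^ (i-1) * X 1 ^ j := by
  simp [pderiv_mul, pderiv_pow, pderiv_X_self, pderiv_X_of_ne (show (1:Fin 2) ≠ 0 by decide)]
  ring

lemma pd1_sq (d : ℝ) (i j : ℕ) :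
    pderiv 1 (pderiv 1 (C d * X 0 ^ i * X 1 ^ j : MvPolynomial (Fin 2) ℝ))
      = C (d * j * ((j-1 : ℕ) : ℝ)) * X 0 ^ i * X 1 ^ (j-2) := by
  rw [pderiv1_term, pderiv1_term, Nat.sub_sub]

lemma pd0_sq (d : ℝ) (i j : ℕ) :
    pderiv 0 (pderiv 0 (C d * X 0 ^ i * X 1 ^ j : MvPolynomial (Fin 2) ℝ))
      = C (d * i * ((i-1 : ℕ) : ℝ)) * X 0 ^ (i-2) * X 1 ^ j := by
  rw [pderiv0_term, pderiv0_term, Nat.sub_sub]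

lemma SpX0 (n : ℕ) : Sp n * X 0 ^ 2
    = ∑ k ∈ range (n+1), C (c n k) * X 0 ^ (2*n+2-2*k) * X 1 ^ (2*k) := by
  unfold Sp
  rw [Finset.sum_mul]
  refine Finset.sum_congr rfl (fun k hk => ?_)
  have hk' : k ≤ n := by simpa using Nat.lt_succ_iff.mp (Finset.mem_range.mp hk)
  have e : 2*n+2-2*k = (2*n-2*k)+2 := by omega
  rw [e, pow_add]; ring

lemma SpX1 (n : ℕ) : Sp n * X 1 ^ 2
    = ∑ k ∈ range (n+1), C (c n k) * X 0 ^ (2*n-2*k) * X 1 ^ (2*k+2) := by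
  unfold Sp
  rw [Finset.sum_mul]
  refine Finset.sum_congr rfl (fun k hk => ?_)
  rw [pow_add]; ring

lemma SqX0 (n : ℕ) : Sq n * X 0 ^ 2
    = ∑ k ∈ range (n+1), C (c n (n-k)) * X 0 ^ (2*n+2-2*k) * X 1 ^ (2*k) := by
  unfold Sq
  rw [Finset.sum_mul]
  refine Finset.sum_congr rfl (fun k hk => ?_)
  have hk' : k ≤ n := by simpa using Nat.lt_succ_iff.mp (Finset.mem_range.mp hk)
  have e : 2*n+2-2*k = (2*n-2*k)+2 := by omega
  rw [e, pow_add]; ring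

lemma SqX1 (n : ℕ) : Sq n * X 1 ^ 2
    = ∑ k ∈ range (n+1), C (c n (n-k)) * X 0 ^ (2*n-2*k) * X 1 ^ (2*k+2) := by
  unfold Sq
  rw [Finset.sum_mul]
  refine Finset.sum_congr rfl (fun k hk => ?_)
  rw [pow_add]; ring

lemma D2 (n : ℕ) : pderiv 1 (pderiv 1 (Pm n)) = Sp n * (1 - X 0 ^ 2 - X 1 ^ 2) := by
  have hA : pderiv 1 (pderiv 1 (∑ k ∈ range (n+2),
        C (aa n k) * X 0 ^ (2*n+2-2*k) * X 1 ^ (2*k) : MvPolynomial (Fin 2) ℝ)) = Sp n := by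
    rw [map_sum, map_sum]
    have step : ∀ k ∈ range (n+2), pderiv 1 (pderiv 1 (C (aa n k) * X 0 ^ (2*n+2-2*k) * X 1 ^ (2*k) : MvPolynomial (Fin 2) ℝ))
        = C (aa n k * ((2*k : ℕ) : ℝ) * ((2*k-1 : ℕ) : ℝ)) * X 0 ^ (2*n+2-2*k) * X 1 ^ (2*k-2) :=
      fun k _ => pd1_sq _ _ _
    rw [Finset.sum_congr rfl step, Finset.sum_range_succ']
    have h0 : C (aa n 0 * ((2*0 : ℕ) : ℝ) * ((2*0-1 : ℕ) : ℝ)) * (X 0 : MvPolynomial (Fin 2) ℝ) ^ (2*n+2-2*0) * X 1 ^ (2*0-2) = 0 := by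
      norm_num
    rw [h0, add_zero]
    unfold Sp
    refine Finset.sum_congr rfl (fun k hk => ?_)
    have e1 : 2*n+2-2*(k+1) = 2*n-2*k := by omega
    have e2 : 2*(k+1)-2 = 2*k := by omega
    have e3 : (2*(k+1)-1 : ℕ) = 2*k+1 := by omega
    rw [e1, e2, e3]
    congr 1
    congr 1
    congr 1
    have := aa_mul n k
    push_cast
    linear_combination this
  have hB : pderiv 1 (pderiv 1 (∑ k ∈ range (n+3),
        C (bb n k) * X 0 ^ (2*n+4-2*k) * X 1 ^ (2*k) : MvPolynomial (Fin 2) ℝ))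
      = ∑ k ∈ range (n+2), C (-(cb n k)) * X 0 ^ (2*n+2-2*k) * X 1 ^ (2*k) := by
    rw [map_sum, map_sum]
    have step : ∀ k ∈ range (n+3), pderiv 1 (pderiv 1 (C (bb n k) * X 0 ^ (2*n+4-2*k) * X 1 ^ (2*k) : MvPolynomial (Fin 2) ℝ))
        = C (bb n k * ((2*k : ℕ) : ℝ) * ((2*k-1 : ℕ) : ℝ)) * X 0 ^ (2*n+4-2*k) * X 1 ^ (2*k-2) :=
      fun k _ => pd1_sq _ _ _
    rw [Finset.sum_congr rfl step, Finset.sum_range_succ']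
    have h0 : C (bb n 0 * ((2*0 : ℕ) : ℝ) * ((2*0-1 : ℕ) : ℝ)) * (X 0 : MvPolynomial (Fin 2) ℝ) ^ (2*n+4-2*0) * X 1 ^ (2*0-2) = 0 := by
      norm_num
    rw [h0, add_zero]
    refine Finset.sum_congr rfl (fun k hk => ?_)
    have e1 : 2*n+4-2*(k+1) = 2*n+2-2*k := by omega
    have e2 : 2*(k+1)-2 = 2*k := by omega
    have e3 : (2*(k+1)-1 : ℕ) = 2*k+1 := by omega
    rw [e1, e2, e3]
    congr 1
    congr 1
    congr 1
    have := bb_mul n k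
    push_cast
    linear_combination this
  have hsplit : (∑ k ∈ range (n+2), C (-(cb n k)) * (X 0 : MvPolynomial (Fin 2) ℝ) ^ (2*n+2-2*k) * X 1 ^ (2*k))
      = -(Sp n * X 0 ^ 2) - Sp n * X 1 ^ 2 := by
    have expand : ∀ k ∈ range (n+2), C (-(cb n k)) * (X 0 : MvPolynomial (Fin 2) ℝ) ^ (2*n+2-2*k) * X 1 ^ (2*k)
        = -(C (c n k) * X 0 ^ (2*n+2-2*k) * X 1 ^ (2*k)) + -(C (pv n k) * X 0 ^ (2*n+2-2*k) * X 1 ^ (2*k)) := by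
      intro k _
      rw [cb_eq, neg_add, map_add]
      simp only [map_neg]
      ring
    rw [Finset.sum_congr rfl expand, Finset.sum_add_distrib]
    have p1 : (∑ k ∈ range (n+2), -(C (c n k) * (X 0 : MvPolynomial (Fin 2) ℝ) ^ (2*n+2-2*k) * X 1 ^ (2*k)))
        = -(Sp n * X 0 ^ 2) := by
      rw [Finset.sum_range_succ, c_eq_zero n (n+1) (by omega)]
      simp only [map_zero, zero_mul, neg_zero, add_zero]
      rw [SpX0, ← Finset.sum_neg_distrib]
    have p2 : (∑ k ∈ range (n+2), -(C (pv n k) * (X 0 : MvPolynomial (Fin 2) ℝ) ^ (2*n+2-2*k) * X 1 ^ (2*k)))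
        = -(Sp n * X 1 ^ 2) := by
      rw [Finset.sum_range_succ']
      have h0 : -(C (pv n 0) * (X 0 : MvPolynomial (Fin 2) ℝ) ^ (2*n+2-2*0) * X 1 ^ (2*0)) = 0 := by
        show -(C (0:ℝ) * _ * _) = 0
        simp
      rw [h0, add_zero, SpX1, ← Finset.sum_neg_distrib]
      refine Finset.sum_congr rfl (fun k hk => ?_)
      have e1 : 2*n+2-2*(k+1) = 2*n-2*k := by omega
      have e2 : 2*(k+1) = 2*k+2 := by omega
      rw [e1, e2]
      rfl
    rw [p1, p2]
    ring
  unfold Pm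
  simp only [map_add]
  rw [hA, hB, hsplit]
  ring

lemma D1 (n : ℕ) : pderiv 0 (pderiv 0 (Pm n)) = Sq n * (1 - X 0 ^ 2 - X 1 ^ 2) := by
  have hA : pderiv 0 (pderiv 0 (∑ k ∈ range (n+2),
        C (aa n k) * X 0 ^ (2*n+2-2*k) * X 1 ^ (2*k) : MvPolynomial (Fin 2) ℝ)) = Sq n := by
    rw [map_sum, map_sum]
    have step : ∀ k ∈ range (n+2), pderiv 0 (pderiv 0 (C (aa n k) * X 0 ^ (2*n+2-2*k) * X 1 ^ (2*k) : MvPolynomial (Fin 2) ℝ))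
        = C (aa n k * ((2*n+2-2*k : ℕ) : ℝ) * ((2*n+2-2*k-1 : ℕ) : ℝ)) * X 0 ^ (2*n+2-2*k-2) * X 1 ^ (2*k) :=
      fun k _ => pd0_sq _ _ _
    rw [Finset.sum_congr rfl step, Finset.sum_range_succ]
    have h0 : C (aa n (n+1) * ((2*n+2-2*(n+1) : ℕ) : ℝ) * ((2*n+2-2*(n+1)-1 : ℕ) : ℝ)) * (X 0 : MvPolynomial (Fin 2) ℝ) ^ (2*n+2-2*(n+1)-2) * X 1 ^ (2*(n+1)) = 0 := by
      have e : 2*n+2-2*(n+1) = 0 := by omega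
      rw [e]
      norm_num
    rw [h0, add_zero]
    unfold Sq
    refine Finset.sum_congr rfl (fun k hk => ?_)
    have hk' : k ≤ n := by simpa using Nat.lt_succ_iff.mp (Finset.mem_range.mp hk)
    obtain ⟨m, hm⟩ : ∃ m, n = k + m := ⟨n - k, by omega⟩
    have e1 : (2*n+2-2*k : ℕ) = 2*m+2 := by omega
    have e2 : (2*n+2-2*k-1 : ℕ) = 2*m+1 := by omega
    have e3 : (2*n+2-2*k-2 : ℕ) = 2*n-2*k := by omega
    have e4 : n - k = m := by omega
    rw [e3, e2, e1, e4]
    congr 2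
    congr 1
    have := aa_flip n k m hm
    push_cast
    linear_combination this
  have hB : pderiv 0 (pderiv 0 (∑ k ∈ range (n+3),
        C (bb n k) * X 0 ^ (2*n+4-2*k) * X 1 ^ (2*k) : MvPolynomial (Fin 2) ℝ))
      = ∑ k ∈ range (n+2), C (-(cb n (n+1-k))) * X 0 ^ (2*n+2-2*k) * X 1 ^ (2*k) := by
    rw [map_sum, map_sum]
    have step : ∀ k ∈ range (n+3), pderiv 0 (pderiv 0 (C (bb n k) * X 0 ^ (2*n+4-2*k) * X 1 ^ (2*k) : MvPolynomial (Fin 2) ℝ))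
        = C (bb n k * ((2*n+4-2*k : ℕ) : ℝ) * ((2*n+4-2*k-1 : ℕ) : ℝ)) * X 0 ^ (2*n+4-2*k-2) * X 1 ^ (2*k) :=
      fun k _ => pd0_sq _ _ _
    rw [Finset.sum_congr rfl step, Finset.sum_range_succ]
    have h0 : C (bb n (n+2) * ((2*n+4-2*(n+2) : ℕ) : ℝ) * ((2*n+4-2*(n+2)-1 : ℕ) : ℝ)) * (X 0 : MvPolynomial (Fin 2) ℝ) ^ (2*n+4-2*(n+2)-2) * X 1 ^ (2*(n+2)) = 0 := by
      have e : 2*n+4-2*(n+2) = 0 := by omega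
      rw [e]
      norm_num
    rw [h0, add_zero]
    refine Finset.sum_congr rfl (fun k hk => ?_)
    have hk' : k ≤ n + 1 := by simpa using Nat.lt_succ_iff.mp (Finset.mem_range.mp hk)
    have e3 : (2*n+4-2*k-2 : ℕ) = 2*n+2-2*k := by omega
    rw [e3]
    congr 2
    match k, hk' with
    | 0, _ =>
      have := bb_zero_mul n
      have e1 : (2*n+4-2*0 : ℕ) = 2*n+4 := by omega
      have e2 : (2*n+4-2*0-1 : ℕ) = 2*n+3 := by omega
      have e4 : n+1-0 = n+1 := by omega
      rw [e2, e1, e4]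
      congr 1
      push_cast
      linear_combination this
    | (k'+1), hk' =>
      obtain ⟨m, hm⟩ : ∃ m, n = k' + m := ⟨n - k', by omega⟩
      have := bb_flip n k' m hm
      have e1 : (2*n+4-2*(k'+1) : ℕ) = 2*m+2 := by omega
      have e2 : (2*n+4-2*(k'+1)-1 : ℕ) = 2*m+1 := by omega
      have e4 : n+1-(k'+1) = m := by omega
      rw [e2, e1, e4]
      congr 1
      push_cast
      linear_combination this
  have hsplit : (∑ k ∈ range (n+2), C (-(cb n (n+1-k))) * (X 0 : MvPolynomial (Fin 2) ℝ) ^ (2*n+2-2*k) * X 1 ^ (2*k))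
      = -(Sq n * X 0 ^ 2) - Sq n * X 1 ^ 2 := by
    have expand : ∀ k ∈ range (n+2), C (-(cb n (n+1-k))) * (X 0 : MvPolynomial (Fin 2) ℝ) ^ (2*n+2-2*k) * X 1 ^ (2*k)
        = -(C (c n (n+1-k)) * X 0 ^ (2*n+2-2*k) * X 1 ^ (2*k)) + -(C (pv n (n+1-k)) * X 0 ^ (2*n+2-2*k) * X 1 ^ (2*k)) := by
      intro k _
      rw [cb_eq, neg_add, map_add]
      simp only [map_neg]
      ring
    rw [Finset.sum_congr rfl expand, Finset.sum_add_distrib]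
    have p1 : (∑ k ∈ range (n+2), -(C (c n (n+1-k)) * (X 0 : MvPolynomial (Fin 2) ℝ) ^ (2*n+2-2*k) * X 1 ^ (2*k)))
        = -(Sq n * X 1 ^ 2) := by
      rw [Finset.sum_range_succ']
      have h0 : -(C (c n (n+1-0)) * (X 0 : MvPolynomial (Fin 2) ℝ) ^ (2*n+2-2*0) * X 1 ^ (2*0)) = 0 := by
        rw [show n+1-0 = n+1 from rfl, c_eq_zero n (n+1) (by omega)]
        simp
      rw [h0, add_zero, SqX1, ← Finset.sum_neg_distrib]
      refine Finset.sum_congr rfl (fun k hk => ?_)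
      have hk' : k ≤ n := by simpa using Nat.lt_succ_iff.mp (Finset.mem_range.mp hk)
      have e1 : 2*n+2-2*(k+1) = 2*n-2*k := by omega
      have e2 : 2*(k+1) = 2*k+2 := by omega
      have e3 : n+1-(k+1) = n-k := by omega
      rw [e1, e2, e3]
    have p2 : (∑ k ∈ range (n+2), -(C (pv n (n+1-k)) * (X 0 : MvPolynomial (Fin 2) ℝ) ^ (2*n+2-2*k) * X 1 ^ (2*k)))
        = -(Sq n * X 0 ^ 2) := by
      rw [Finset.sum_range_succ]
      have h0 : -(C (pv n (n+1-(n+1))) * (X 0 : MvPolynomial (Fin 2) ℝ) ^ (2*n+2-2*(n+1)) * X 1 ^ (2*(n+1))) = 0 := by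
        rw [show n+1-(n+1) = 0 by omega]
        show -(C (0:ℝ) * _ * _) = 0
        simp
      rw [h0, add_zero, SqX0, ← Finset.sum_neg_distrib]
      refine Finset.sum_congr rfl (fun k hk => ?_)
      have hk' : k ≤ n := by simpa using Nat.lt_succ_iff.mp (Finset.mem_range.mp hk)
      have e1 : n+1-k = (n-k)+1 := by omega
      rw [e1]
      rfl
    rw [p1, p2]
    ring
  unfold Pm
  simp only [map_add]
  rw [hA, hB, hsplit]
  ring

lemma eval_Sp (n : ℕ) (y : Fin 2 → ℝ) :
    eval y (Sp n) = ∑ k ∈ range (n+1), c n k * (y 0^2)^(n-k) * (y 1^2)^k := by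
  unfold Sp
  rw [map_sum]
  refine Finset.sum_congr rfl (fun k hk => ?_)
  have hk' : k ≤ n := by simpa using Nat.lt_succ_iff.mp (Finset.mem_range.mp hk)
  have e : 2*n-2*k = 2*(n-k) := by omega
  simp only [map_mul, map_pow, eval_C, eval_X]
  rw [e, pow_mul, pow_mul]

lemma eval_Sq (n : ℕ) (y : Fin 2 → ℝ) :
    eval y (Sq n) = ∑ k ∈ range (n+1), c n (n-k) * (y 0^2)^(n-k) * (y 1^2)^k := by
  unfold Sq
  rw [map_sum]
  refine Finset.sum_congr rfl (fun k hk => ?_)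
  have hk' : k ≤ n := by simpa using Nat.lt_succ_iff.mp (Finset.mem_range.mp hk)
  have e : 2*n-2*k = 2*(n-k) := by omega
  simp only [map_mul, map_pow, eval_C, eval_X]
  rw [e, pow_mul, pow_mul]

lemma binom_sum (n : ℕ) (y : Fin 2 → ℝ) :
    ∑ k ∈ range (n+1), (n.choose k : ℝ) * (y 0^2)^(n-k) * (y 1^2)^k = (y 0^2 + y 1^2)^n := by
  rw [add_comm (y 0^2) (y 1^2), add_pow]
  refine Finset.sum_congr rfl (fun k hk => ?_)
  ring

lemma Sp_bounds (n : ℕ) (y : Fin 2 → ℝ) :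
    0 ≤ eval y (Sp n) ∧ eval y (Sp n) ≤ (y 0^2 + y 1^2)^n := by
  rw [eval_Sp]
  constructor
  · refine Finset.sum_nonneg (fun k hk => ?_)
    exact mul_nonneg (mul_nonneg (c_nonneg n k) (by positivity)) (by positivity)
  · rw [← binom_sum n y]
    refine Finset.sum_le_sum (fun k hk => ?_)
    have hk' : k ≤ n := by simpa using Nat.lt_succ_iff.mp (Finset.mem_range.mp hk)
    have hle := c_le_choose n k (n-k) (by omega)
    have h1 : (0:ℝ) ≤ (y 0^2)^(n-k) * (y 1^2)^k := by positivity
    calc c n k * (y 0^2)^(n-k) * (y 1^2)^k = c n k * ((y 0^2)^(n-k) * (y 1^2)^k) := by ring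
      _ ≤ (n.choose k : ℝ) * ((y 0^2)^(n-k) * (y 1^2)^k) := mul_le_mul_of_nonneg_right hle h1
      _ = (n.choose k : ℝ) * (y 0^2)^(n-k) * (y 1^2)^k := by ring

lemma Sq_bounds (n : ℕ) (y : Fin 2 → ℝ) :
    0 ≤ eval y (Sq n) ∧ eval y (Sq n) ≤ (y 0^2 + y 1^2)^n := by
  rw [eval_Sq]
  constructor
  · refine Finset.sum_nonneg (fun k hk => ?_)
    exact mul_nonneg (mul_nonneg (c_nonneg n _) (by positivity)) (by positivity)
  · rw [← binom_sum n y]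
    refine Finset.sum_le_sum (fun k hk => ?_)
    have hk' : k ≤ n := by simpa using Nat.lt_succ_iff.mp (Finset.mem_range.mp hk)
    have hle : c n (n-k) ≤ ((n.choose (n-k)) : ℝ) := c_le_choose n (n-k) k (by omega)
    rw [Nat.choose_symm hk'] at hle
    have h1 : (0:ℝ) ≤ (y 0^2)^(n-k) * (y 1^2)^k := by positivity
    calc c n (n-k) * (y 0^2)^(n-k) * (y 1^2)^k = c n (n-k) * ((y 0^2)^(n-k) * (y 1^2)^k) := by ring
      _ ≤ (n.choose k : ℝ) * ((y 0^2)^(n-k) * (y 1^2)^k) := mul_le_mul_of_nonneg_right hle h1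
      _ = (n.choose k : ℝ) * (y 0^2)^(n-k) * (y 1^2)^k := by ring

lemma eval_factor (y : Fin 2 → ℝ) :
    eval y ((1 : MvPolynomial (Fin 2) ℝ) - X 0 ^ 2 - X 1 ^ 2) = 1 - (y 0^2 + y 1^2) := by
  simp only [map_sub, map_pow, eval_X, map_one]
  ring

end Calib

open Calib in
theorem exists_polynomial_calibration (n : ℕ) :
    ∃ P : MvPolynomial (Fin 2) ℝ,
      (∀ y : Fin 2 → ℝ,
        |eval y (pderiv 0 (pderiv 0 P))| ≤ (y 0^2 + y 1^2)^n * |1 - (y 0^2 + y 1^2)|) ∧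
      (∀ y : Fin 2 → ℝ,
        |eval y (pderiv 1 (pderiv 1 P))| ≤ (y 0^2 + y 1^2)^n * |1 - (y 0^2 + y 1^2)|) ∧
      (∀ t : ℝ, eval (fun i => if i = 0 then (0 : ℝ) else t) (pderiv 1 (pderiv 1 P)) =
        t^(2*n) * (1 - t^2)) := by
  refine ⟨Pm n, ?_, ?_, ?_⟩
  · intro y
    rw [D1, map_mul, abs_mul, eval_factor]
    obtain ⟨h0, h1⟩ := Sq_bounds n y
    rw [abs_of_nonneg h0]
    exact mul_le_mul_of_nonneg_right h1 (abs_nonneg _)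
  · intro y
    rw [D2, map_mul, abs_mul, eval_factor]
    obtain ⟨h0, h1⟩ := Sp_bounds n y
    rw [abs_of_nonneg h0]
    exact mul_le_mul_of_nonneg_right h1 (abs_nonneg _)
  · intro t
    set y : Fin 2 → ℝ := fun i => if i = 0 then (0 : ℝ) else t with hy
    have hy0 : y 0 = 0 := by simp [hy]
    have hy1 : y 1 = t := by simp [hy]
    rw [D2, map_mul, eval_factor, eval_Sp, hy0, hy1]
    have hsum : ∑ k ∈ range (n+1), c n k * ((0:ℝ)^2)^(n-k) * (t^2)^k = t^(2*n) := by
      rw [Finset.sum_range_succ, Finset.sum_eq_zero, zero_add]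
      · rw [c_top, Nat.sub_self, pow_zero, mul_comm 2 n, pow_mul]
        ring
      · intro k hk
        have hk' : k < n := Finset.mem_range.mp hk
        rw [show ((0:ℝ)^2) = 0 by norm_num, zero_pow (show n-k ≠ 0 by omega)]
        ring
    rw [hsum]
    ring
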